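/- Let p be an odd prime and let a > b be positive integers such that p^a − p^b + 1 = x² for some positive integer x. Then b divides a. -/
import Mathlib

def auxXY (w : ℤ) : ℕ → ℤ × ℤ
  | 0 => (1, 0)
  | n+1 => ((auxXY w n).1 + w * (auxXY w n).2, (auxXY w n).1 + (auxXY w n).2)

lemma auxXY_key (w : ℤ) : ∀ n, (auxXY w n).1 ^ 2 - w * (auxXY w n).2 ^ 2 = (1 - w) ^ n
  | 0 => by simp [auxXY]
  | n+1 => by
    have ih := auxXY_key w n
    simp only [auxXY, pow_succ]
    linear_combination (1 - w) * ih

set_option maxHeartbeats 1000000 in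
theorem b_dvd_a_of_p_pow_sub_p_pow_add_one_eq_sq
    (p a b x : ℕ) (hp : p.Prime) (hodd : Odd p)
    (ha : 0 < a) (hb : 0 < b) (hx : 0 < x) (hab : a > b)
    (heq : (p : ℤ) ^ a - (p : ℤ) ^ b + 1 = (x : ℤ) ^ 2) :
    b ∣ a := by
  haveI := Fact.mk hp
  have hp2 : p ≠ 2 := by
    rintro rfl
    simp [Nat.odd_iff] at hodd
  have hp3 : 3 ≤ p := by
    have := hp.two_le
    omega
  set P : ℤ := (p : ℤ) with hP
  have hP3 : (3 : ℤ) ≤ P := by rw [hP]; exact_mod_cast hp3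
  have hPb3 : (3 : ℤ) ≤ P ^ b := le_trans hP3 (le_self_pow₀ (by linarith) hb.ne')
  have hPpos : (0 : ℤ) < P := by linarith
  -- the ceiling m of a/b
  set m : ℕ := (a - 1) / b + 1 with hm
  have hbmq : b * m = b * ((a - 1) / b) + b := by rw [hm]; ring
  have hdm := Nat.div_add_mod (a - 1) b
  have hmod := Nat.mod_lt (a - 1) hb
  have hm1 : a ≤ b * m := by rw [hbmq]; omega
  have hm2 : b * m ≤ (a - 1) + b := by rw [hbmq]; omega
  -- quantities
  set w : ℤ := 1 - P ^ b with hw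
  set Q : ℤ := P ^ b - 1 with hQ
  set X : ℤ := (auxXY w m).1 with hX
  set Y : ℤ := (auxXY w m).2 with hY
  have h1 : X ^ 2 + Q * Y ^ 2 = P ^ (b * m) := by
    have := auxXY_key w m
    rw [hw] at this
    rw [hQ]
    have h1w : (1 : ℤ) - (1 - P ^ b) = P ^ b := by ring
    rw [h1w, ← pow_mul] at this
    linarith [this]
  have h2 : (x : ℤ) ^ 2 + Q = P ^ a := by rw [hQ]; linarith [heq]
  have hQpos : (0 : ℤ) < Q := by rw [hQ]; linarith
  -- p does not divide x
  have hnx : ¬ P ∣ (x : ℤ) := by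
    intro hd
    have d1 : P ∣ P ^ a := dvd_pow_self P ha.ne'
    have d2 : P ∣ P ^ b := dvd_pow_self P hb.ne'
    have d3 : P ∣ (x : ℤ) ^ 2 := dvd_pow hd two_ne_zero
    have : P ∣ (1 : ℤ) := by
      have e1 : (1 : ℤ) = (x : ℤ) ^ 2 - P ^ a + P ^ b := by linarith [heq]
      rw [e1]
      exact dvd_add (dvd_sub d3 d1) d2
    have := Int.le_of_dvd one_pos this
    linarith
  -- p does not divide Y
  have hw1 : ((w : ℤ) : ZMod p) = 1 := by
    rw [hw, hP]
    push_cast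
    rw [ZMod.natCast_self, zero_pow hb.ne']
    ring
  have hcast : ∀ n : ℕ, (((auxXY w (n+1)).1 : ZMod p) = 2 ^ n ∧
      ((auxXY w (n+1)).2 : ZMod p) = 2 ^ n) := by
    intro n
    induction n with
    | zero =>
      constructor <;> · simp [auxXY]
    | succ k ih =>
      obtain ⟨ih1, ih2⟩ := ih
      constructor
      · show (((auxXY w (k+1)).1 + w * (auxXY w (k+1)).2 : ℤ) : ZMod p) = 2 ^ (k+1)
        push_cast
        rw [ih1, ih2, hw1]
        ring
      · show (((auxXY w (k+1)).1 + (auxXY w (k+1)).2 : ℤ) : ZMod p) = 2 ^ (k+1)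
        push_cast
        rw [ih1, ih2]
        ring
  have hYcast : ((Y : ℤ) : ZMod p) = 2 ^ ((a - 1) / b) := by
    rw [hY, hm]
    exact (hcast _).2
  have h2ne : (2 : ZMod p) ≠ 0 := by
    have : ((2 : ℕ) : ZMod p) ≠ 0 := by
      rw [Ne, ZMod.natCast_eq_zero_iff]
      intro hdd
      have := Nat.le_of_dvd two_pos hdd
      omega
    simpa using this
  have hnY : ¬ P ∣ Y := by
    intro hd
    have h0 : ((Y : ℤ) : ZMod p) = 0 := by
      rw [ZMod.intCast_zmod_eq_zero_iff_dvd]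
      exact_mod_cast hd
    rw [hYcast] at h0
    exact pow_ne_zero _ h2ne h0
  have hPP : Prime P := Nat.prime_iff_prime_int.mp hp
  -- divisibility of the product
  have hprod : (X - (x : ℤ) * Y) * (X + (x : ℤ) * Y) = P ^ (b * m) - P ^ a * Y ^ 2 := by
    linear_combination h1 - Y ^ 2 * h2
  have hdvdprod : P ^ a ∣ (X - (x : ℤ) * Y) * (X + (x : ℤ) * Y) := by
    rw [hprod]
    exact dvd_sub (pow_dvd_pow P hm1) (dvd_mul_right _ _)
  -- size bounds
  have heq2 : P ^ (b * m) * P ^ a = (X ^ 2 + Q * Y ^ 2) * ((x : ℤ) ^ 2 + Q) := by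
    rw [h1, h2]
  have hb1 : Q * (X - (x : ℤ) * Y) ^ 2 ≤ P ^ (b * m) * P ^ a := by
    nlinarith [sq_nonneg ((x : ℤ) * X + Q * Y), heq2]
  have hb2 : Q * (X + (x : ℤ) * Y) ^ 2 ≤ P ^ (b * m) * P ^ a := by
    nlinarith [sq_nonneg ((x : ℤ) * X - Q * Y), heq2]
  -- P^(bm)*P^a < Q * (P^a)^2
  have hA : P ^ a = P ^ (a - 1) * P := by
    rw [← pow_succ]
    congr 1
    omega
  have hApos : (0 : ℤ) < P ^ (a - 1) := pow_pos hPpos _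
  have hpowle : P ^ (b * m) ≤ P ^ ((a - 1) + b) := pow_le_pow_right₀ (by linarith) hm2
  have hsz : P ^ (b * m) * P ^ a < Q * (P ^ a) ^ 2 := by
    have e1 : P ^ ((a - 1) + b) = P ^ (a - 1) * P ^ b := pow_add P _ _
    have e2 : P ^ b < Q * P := by
      rw [hQ]
      nlinarith [hPb3, hP3]
    calc P ^ (b * m) * P ^ a ≤ P ^ (a - 1) * P ^ b * P ^ a := by
          rw [← e1]; exact mul_le_mul_of_nonneg_right hpowle (by positivity)
      _ < P ^ (a - 1) * (Q * P) * P ^ a := by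
          have : P ^ (a-1) * P ^ b < P ^ (a-1) * (Q * P) := by
            exact mul_lt_mul_of_pos_left e2 hApos
          exact mul_lt_mul_of_pos_right this (pow_pos hPpos a)
      _ = Q * (P ^ a) ^ 2 := by rw [hA]; ring
  -- the divisible factor is zero
  have hzero : X - (x : ℤ) * Y = 0 ∨ X + (x : ℤ) * Y = 0 := by
    have key : ∀ z : ℤ, P ^ a ∣ z → Q * z ^ 2 ≤ P ^ (b * m) * P ^ a → z = 0 := by
      intro z hdz hle
      obtain ⟨k, rfl⟩ := hdz
      have hzsq : (P ^ a) ^ 2 * k ^ 2 < (P ^ a) ^ 2 * 1 := by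
        have h' : Q * ((P ^ a) ^ 2 * k ^ 2) < Q * (P ^ a) ^ 2 := by
          calc Q * ((P ^ a) ^ 2 * k ^ 2) = Q * (P ^ a * k) ^ 2 := by ring
            _ ≤ P ^ (b * m) * P ^ a := hle
            _ < Q * (P ^ a) ^ 2 := hsz
        have := lt_of_mul_lt_mul_left h' (le_of_lt hQpos)
        simpa using this
      have hk2 : k ^ 2 < 1 := lt_of_mul_lt_mul_left hzsq (by positivity)
      have : k = 0 := by nlinarith [sq_nonneg k]
      rw [this]; ring
    by_cases hc : P ∣ (X - (x : ℤ) * Y)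
    · left
      have hnc : ¬ P ∣ (X + (x : ℤ) * Y) := by
        intro hc2
        have hds : P ∣ 2 * ((x : ℤ) * Y) := by
          have : (X + (x : ℤ) * Y) - (X - (x : ℤ) * Y) = 2 * ((x : ℤ) * Y) := by ring
          rw [← this]
          exact dvd_sub hc2 hc
        rcases hPP.dvd_mul.mp hds with h | h
        · have := Int.le_of_dvd two_pos h
          linarith
        · rcases hPP.dvd_mul.mp h with h' | h'
          · exact hnx h'
          · exact hnY h'
      have := hPP.pow_dvd_of_dvd_mul_right a hnc hdvdprod
      exact key _ this hb1
    · right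
      have := hPP.pow_dvd_of_dvd_mul_left a hc hdvdprod
      exact key _ this hb2
  -- conclude X^2 = x^2 Y^2, hence P^a Y^2 = P^(bm)
  have hXX : X ^ 2 = (x : ℤ) ^ 2 * Y ^ 2 := by
    rcases hzero with h | h
    · have : X = (x : ℤ) * Y := by linarith
      rw [this]; ring
    · have : X = -((x : ℤ) * Y) := by linarith
      rw [this]; ring
  have hfin : P ^ a * Y ^ 2 = P ^ (b * m) := by
    linear_combination h1 - hXX - Y ^ 2 * h2
  have hbma : b * m = a := by
    by_contra hne
    have hlt : a < b * m := lt_of_le_of_ne hm1 (fun h => hne h.symm)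
    have hsplit : P ^ (b * m) = P ^ a * P ^ (b * m - a) := by
      rw [← pow_add]
      congr 1
      omega
    rw [hsplit] at hfin
    have hcancel : Y ^ 2 = P ^ (b * m - a) :=
      mul_left_cancel₀ (pow_ne_zero a (ne_of_gt hPpos)) hfin
    have hd : P ∣ Y ^ 2 := by
      rw [hcancel]
      exact dvd_pow_self P (by omega)
    exact hnY (hPP.dvd_of_dvd_pow hd)
  exact ⟨m, hbma.symm⟩
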